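/- Let B be a bi-skew brace. Then λ_{b·a} = λ_{a+b} for all a,b ∈ B, where λ_a(b) = -a + a·b. Consequently, the map λ : B → Aut(B,+) preserves both operations: λ_{a+b} = λ_b ∘ λ_a and λ_{a·b} = λ_a ∘ λ_b. -/

import Mathlib

class SkewBrace (B : Type*) extends Group B, AddGroup B where
  one_eq_zero : (1 : B) = 0
  left_compat : ∀ a b c : B, a * (b + c) = a * b - a + a * c

class BiSkewBrace (B : Type*) extends SkewBrace B where
  op_compat : ∀ a b c : B, a + b * c = (a + b) * a⁻¹ * (a + c)

lemma sb_mul_zero {B : Type*} [SkewBrace B] (a : B) : a * (0 : B) = a := by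
  have h := SkewBrace.left_compat a (0 : B) 0
  rw [add_zero] at h
  exact sub_eq_zero.mp (right_eq_add.mp h)

lemma sb_mul_neg {B : Type*} [SkewBrace B] (a b : B) :
    a * (-b) = a - a * b + a := by
  have h := SkewBrace.left_compat a b (-b)
  rw [add_neg_cancel, sb_mul_zero] at h
  -- h : a = a * b - a + a * (-b)
  have h2 := congrArg (fun x => -(a * b - a) + x) h.symm
  simp only [neg_add_cancel_left] at h2
  rw [h2, neg_sub]

lemma sb_lam_mul {B : Type*} [SkewBrace B] (a b c : B) :
    -(a * b) + (a * b) * c = -a + a * (-b + b * c) := by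
  rw [SkewBrace.left_compat a (-b) (b * c), sb_mul_neg, mul_assoc]
  simp only [sub_eq_add_neg, add_assoc, neg_add_cancel_left, add_neg_cancel_left]

lemma sb_lam_add {B : Type*} [BiSkewBrace B] (a b c : B) :
    -(a + b) + (a + b) * c = -b + b * (-a + a * c) := by
  have h := BiSkewBrace.op_compat a b (-a + a * c)
  rw [add_neg_cancel_left, mul_assoc, inv_mul_cancel_left] at h
  -- h : a + b * (-a + a * c) = (a + b) * c
  rw [← h]
  simp only [neg_add_rev, add_assoc, neg_add_cancel_left]

theorem biSkew_lambda_both_ops {B : Type*} [BiSkewBrace B] :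
    (∀ a b c : B, -(b * a) + (b * a) * c = -(a + b) + (a + b) * c) ∧
    (∀ a b c : B, -(a + b) + (a + b) * c = -b + b * (-a + a * c)) ∧
    (∀ a b c : B, -(a * b) + (a * b) * c = -a + a * (-b + b * c)) := by
  refine ⟨fun a b c => ?_, fun a b c => sb_lam_add a b c, fun a b c => sb_lam_mul a b c⟩
  rw [sb_lam_mul b a c, sb_lam_add a b c]
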